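/- Let a ∈ (1.5, 2) be irrational and let n ∈ ℕ with Ostrowski representation Σ_k b_{k+1}q_k. Then the fractional remainder f(na) := na − m (where m is the unique natural number with na − m ∈ [1−a, 2−a)) equals Σ_k b_{k+1}β_k. -/

import Mathlib

theorem f_eq_sum_beta (a : ℝ) (ha : Irrational a)
    (aCF : ℕ → ℤ) (ζ : ℕ → ℝ)
    (hζ0 : ζ 0 = a)
    (hfloor : ∀ k, aCF k = ⌊ζ k⌋)
    (hζ : ∀ k, ζ k = (aCF k : ℝ) + 1 / ζ (k + 1))
    (p q : ℕ → ℤ)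
    (hq0 : q 0 = 1) (hq1 : q 1 = aCF 1)
    (hqrec : ∀ k, q (k + 2) = aCF (k + 2) * q (k + 1) + q k)
    (hp0 : p 0 = aCF 0) (hp1 : p 1 = aCF 1 * aCF 0 + 1)
    (hprec : ∀ k, p (k + 2) = aCF (k + 2) * p (k + 1) + p k)
    (β : ℕ → ℝ)
    (hβ : ∀ k, β k = (q k : ℝ) * a - (p k : ℝ)) (h1 : 3 / 2 < a) (h2 : a < 2)
    (n : ℕ)
    (b : ℕ → ℕ)
    (hbfin : {k | b k ≠ 0}.Finite)
    (hb0 : b 0 = 0)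
    (hb1 : (b 1 : ℤ) < aCF 1)
    (hble : ∀ k ≥ 1, (b k : ℤ) ≤ aCF k)
    (hbcons : ∀ k ≥ 2, (b k : ℤ) = aCF k → b (k - 1) = 0)
    (hnrep : (n : ℤ) = ∑ᶠ k : ℕ, (b (k + 1) : ℤ) * q k) :
    ∀ m : ℕ, (n : ℝ) * a - (m : ℝ) ∈ Set.Ico (1 - a) (2 - a) →
      (n : ℝ) * a - (m : ℝ) = ∑ᶠ k : ℕ, (b (k + 1) : ℝ) * β k := by
  -- irrationality of all ζ k
  have hζirr : ∀ k, Irrational (ζ k) := by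
    intro k
    induction k with
    | zero => rwa [hζ0]
    | succ k ih =>
      have h := hζ k
      have h2' : (ζ (k+1))⁻¹ = ζ k - (aCF k : ℝ) := by
        rw [← one_div]; linarith [h]
      have : Irrational ((ζ (k+1))⁻¹) := by rw [h2']; exact Irrational.sub_intCast ih _
      exact irrational_inv_iff.mp this
  -- fractional part bounds
  have hfr : ∀ k, 0 < ζ k - (aCF k : ℝ) ∧ ζ k - (aCF k : ℝ) < 1 := by
    intro k
    rw [hfloor k]
    have h0 : ζ k ≠ (⌊ζ k⌋ : ℝ) := (hζirr k).ne_int _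
    constructor
    · have := Int.floor_le (ζ k)
      rcases lt_or_eq_of_le this with h | h
      · linarith
      · exact absurd h.symm h0
    · linarith [Int.lt_floor_add_one (ζ k)]
  have hz1 : ∀ k, 1 < ζ (k + 1) := by
    intro k
    have h := hζ k
    have hfrk := hfr k
    have hd : 0 < 1 / ζ (k+1) := by linarith
    have hd2 : 1 / ζ (k+1) < 1 := by linarith
    have hzpos : 0 < ζ (k+1) := by
      by_contra hc
      push_neg at hc
      have : 1 / ζ (k+1) ≤ 0 := by
        rw [one_div]; exact inv_nonpos.mpr hc
      linarith
    rw [div_lt_one hzpos] at hd2; exact hd2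
  have hzne : ∀ k, ζ (k + 1) ≠ 0 := fun k => by have := hz1 k; linarith
  -- aCF 0 = 1
  have ha0 : aCF 0 = 1 := by
    rw [hfloor 0, hζ0, Int.floor_eq_iff]
    constructor <;> push_cast <;> linarith
  -- ζ 1 * (a - 1) = 1
  have hz1val : ζ 1 * (a - 1) = 1 := by
    have h := hζ 0
    rw [hζ0, ha0] at h
    have := hzne 0
    field_simp at h ⊢
    simp only [zero_add, Int.cast_one] at h ⊢
    linarith
  -- aCF 1 = 1
  have ha1 : aCF 1 = 1 := by
    rw [hfloor 1]
    have hg : 1 < ζ 1 := hz1 0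
    have hl : ζ 1 < 2 := by nlinarith
    rw [Int.floor_eq_iff]
    constructor <;> push_cast <;> linarith
  have hb1z : b 1 = 0 := by
    rw [ha1] at hb1; omega
  -- β values
  have hβ0 : β 0 = a - 1 := by
    rw [hβ 0, hq0, hp0, ha0]; push_cast; ring
  have hβ1 : β 1 = a - 2 := by
    rw [hβ 1, hq1, hp1, ha0, ha1]; push_cast; ring
  -- β recurrence
  have βrec2 : ∀ k, β (k + 2) = (aCF (k + 2) : ℝ) * β (k + 1) + β k := by
    intro k
    rw [hβ, hβ, hβ, hqrec, hprec]
    push_cast; ring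
  -- β step identity
  have βstep : ∀ k, β (k + 1) * ζ (k + 2) = -β k := by
    intro k
    induction k with
    | zero =>
      have h := hζ 1
      rw [ha1] at h
      have hne2 := hzne 1
      have hz2 : ζ 1 - 1 = 1 / ζ 2 := by push_cast at h; linarith
      have hmul : ζ 2 * (ζ 1 - 1) = 1 := by
        rw [hz2]; field_simp
      show β 1 * ζ 2 = -β 0
      rw [hβ1, hβ0]
      linear_combination (ζ 2) * hz1val - (a - 1) * hmul
    | succ k ih =>
      have h := hζ (k + 2)
      have hne : ζ (k + 3) ≠ 0 := hzne (k + 2)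
      have hz : ζ (k + 2) - (aCF (k+2) : ℝ) = 1 / ζ (k + 3) := by linarith
      have hmul : ζ (k + 3) * (ζ (k + 2) - (aCF (k+2) : ℝ)) = 1 := by
        rw [hz]; field_simp
      have hβk2 : β (k + 2) = β (k + 1) * ((aCF (k+2) : ℝ) - ζ (k + 2)) := by
        rw [βrec2 k]; nlinarith [ih]
      show β (k + 2) * ζ (k + 3) = -β (k + 1)
      rw [hβk2]
      linear_combination (-β (k + 1)) * hmul
  -- sign lemma
  have hsign : ∀ k, 0 < (-1 : ℝ) ^ k * β k := by
    intro k
    induction k with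
    | zero => simpa [hβ0] using by linarith
    | succ k ih =>
      have hz : (1 : ℝ) < ζ (k + 2) := hz1 (k + 1)
      have hs := βstep k
      have h3 : ((-1 : ℝ) ^ k * β (k + 1)) * ζ (k + 2) = -((-1 : ℝ) ^ k * β k) := by
        linear_combination ((-1 : ℝ) ^ k) * hs
      rw [pow_succ]
      nlinarith [h3, ih, hz]
  have heven : ∀ j, 0 ≤ β (2 * j) := by
    intro j
    have := hsign (2 * j)
    have he : (-1 : ℝ) ^ (2 * j) = 1 := by
      rw [pow_mul]; norm_num
    rw [he, one_mul] at this; linarith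
  have hodd : ∀ j, β (2 * j + 1) < 0 := by
    intro j
    have := hsign (2 * j + 1)
    have he : (-1 : ℝ) ^ (2 * j + 1) = -1 := by
      rw [pow_succ, pow_mul]; norm_num
    rw [he] at this; linarith
  -- extract bound on digits
  obtain ⟨ub, hub⟩ := hbfin.bddAbove
  set N : ℕ := ub + 1 with hNdef
  have hN : ∀ k, N ≤ k → b k = 0 := by
    intro k hk
    by_contra hc
    have : k ≤ ub := hub hc
    omega
  -- finsum to finite sums
  have hsub1 : (Function.support fun k => (b (k + 1) : ℝ) * β k) ⊆
      ↑(Finset.range (2 * N + 1)) := by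
    intro k hk
    simp only [Function.mem_support] at hk
    simp only [Finset.coe_range, Set.mem_Iio]
    by_contra hc
    push_neg at hc
    have : b (k + 1) = 0 := hN _ (by omega)
    simp [this] at hk
  have hsub2 : (Function.support fun k => (b (k + 1) : ℤ) * q k) ⊆
      ↑(Finset.range (2 * N + 1)) := by
    intro k hk
    simp only [Function.mem_support] at hk
    simp only [Finset.coe_range, Set.mem_Iio]
    by_contra hc
    push_neg at hc
    have : b (k + 1) = 0 := hN _ (by omega)
    simp [this] at hk
  have hS : ∑ᶠ k : ℕ, (b (k + 1) : ℝ) * β k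
      = ∑ k ∈ Finset.range (2 * N + 1), (b (k + 1) : ℝ) * β k :=
    finsum_eq_sum_of_support_subset _ hsub1
  have hn : (n : ℤ) = ∑ k ∈ Finset.range (2 * N + 1), (b (k + 1) : ℤ) * q k := by
    rw [hnrep]; exact finsum_eq_sum_of_support_subset _ hsub2
  set M : ℤ := ∑ k ∈ Finset.range (2 * N + 1), (b (k + 1) : ℤ) * p k with hM
  set S : ℝ := ∑ k ∈ Finset.range (2 * N + 1), (b (k + 1) : ℝ) * β k with hSdef
  have hSval : S = (n : ℝ) * a - (M : ℝ) := by
    have h0 : S = (((∑ k ∈ Finset.range (2 * N + 1), (b (k + 1) : ℤ) * q k) : ℤ) : ℝ) * a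
        - (((∑ k ∈ Finset.range (2 * N + 1), (b (k + 1) : ℤ) * p k) : ℤ) : ℝ) := by
      rw [hSdef]
      push_cast
      rw [Finset.sum_mul, ← Finset.sum_sub_distrib]
      apply Finset.sum_congr rfl
      intro k _
      rw [hβ k]; ring
    rw [h0, ← hn, ← hM]
    push_cast; ring
  -- upper bound by induction
  have hU : ∀ J, ∑ k ∈ Finset.range (2 * J + 1), (b (k + 1) : ℝ) * β k
      ≤ β (2 * J + 1) - β 1 := by
    intro J
    induction J with
    | zero => simp [hb1z]
    | succ J ih =>
      have hsum : ∑ k ∈ Finset.range (2 * (J + 1) + 1), (b (k + 1) : ℝ) * β k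
          = (∑ k ∈ Finset.range (2 * J + 1), (b (k + 1) : ℝ) * β k)
            + (b (2 * J + 2) : ℝ) * β (2 * J + 1)
            + (b (2 * J + 3) : ℝ) * β (2 * J + 2) := by
        rw [show 2 * (J + 1) + 1 = (2 * J + 1) + 1 + 1 from by ring,
          Finset.sum_range_succ, Finset.sum_range_succ]
      rw [hsum]
      have hβg : β (2 * (J + 1) + 1) = β (2 * J + 3) := rfl
      rw [hβg]
      have ht1 : (b (2 * J + 2) : ℝ) * β (2 * J + 1) ≤ 0 :=
        mul_nonpos_of_nonneg_of_nonpos (by positivity) (le_of_lt (hodd J))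
      have ht2 : (b (2 * J + 3) : ℝ) * β (2 * J + 2)
          ≤ (aCF (2 * J + 3) : ℝ) * β (2 * J + 2) := by
        have hb' : (b (2 * J + 3) : ℝ) ≤ (aCF (2 * J + 3) : ℝ) := by
          exact_mod_cast hble (2 * J + 3) (by omega)
        have hbe : 0 ≤ β (2 * J + 2) := heven (J + 1)
        exact mul_le_mul_of_nonneg_right hb' hbe
      have h3 : β (2 * J + 3) = (aCF (2 * J + 3) : ℝ) * β (2 * J + 2) + β (2 * J + 1) :=
        βrec2 (2 * J + 1)
      linarith [ih, ht1, ht2]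
  -- lower bound by induction
  have hL : ∀ J, β (2 * J) - β 0 ≤ ∑ k ∈ Finset.range (2 * J + 1), (b (k + 1) : ℝ) * β k := by
    intro J
    induction J with
    | zero => simp [hb1z]
    | succ J ih =>
      have hsum : ∑ k ∈ Finset.range (2 * (J + 1) + 1), (b (k + 1) : ℝ) * β k
          = (∑ k ∈ Finset.range (2 * J + 1), (b (k + 1) : ℝ) * β k)
            + (b (2 * J + 2) : ℝ) * β (2 * J + 1)
            + (b (2 * J + 3) : ℝ) * β (2 * J + 2) := by
        rw [show 2 * (J + 1) + 1 = (2 * J + 1) + 1 + 1 from by ring,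
          Finset.sum_range_succ, Finset.sum_range_succ]
      rw [hsum]
      have hβg : β (2 * (J + 1)) = β (2 * J + 2) := rfl
      rw [hβg]
      have ht1 : (aCF (2 * J + 2) : ℝ) * β (2 * J + 1)
          ≤ (b (2 * J + 2) : ℝ) * β (2 * J + 1) := by
        have hb' : (b (2 * J + 2) : ℝ) ≤ (aCF (2 * J + 2) : ℝ) := by
          exact_mod_cast hble (2 * J + 2) (by omega)
        exact mul_le_mul_of_nonpos_right hb' (le_of_lt (hodd J))
      have ht2 : 0 ≤ (b (2 * J + 3) : ℝ) * β (2 * J + 2) := by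
        have hbe : 0 ≤ β (2 * J + 2) := heven (J + 1)
        positivity
      have h3 : β (2 * J + 2) = (aCF (2 * J + 2) : ℝ) * β (2 * J + 1) + β (2 * J) :=
        βrec2 (2 * J)
      linarith [ih, ht1, ht2]
  -- S is in the interval
  have hSlo : 1 - a ≤ S := by
    have := hL N
    have he := heven N
    rw [hβ0] at this
    rw [hSdef]; linarith
  have hShi : S < 2 - a := by
    have := hU N
    have ho := hodd N
    rw [hβ1] at this
    rw [hSdef]; linarith
  -- conclusion
  intro m hm
  obtain ⟨hm1, hm2⟩ := hm
  have hMm : (M : ℝ) = (m : ℝ) := by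
    have hd1 : ((M - (m : ℤ) : ℤ) : ℝ) < 1 := by
      push_cast
      nlinarith [hSval, hSlo, hShi]
    have hd2 : (-1 : ℝ) < ((M - (m : ℤ) : ℤ) : ℝ) := by
      push_cast
      nlinarith [hSval, hSlo, hShi]
    have habs : |((M - (m : ℤ) : ℤ) : ℝ)| < 1 := abs_lt.mpr ⟨hd2, hd1⟩
    have h0 : |(M - (m : ℤ) : ℤ)| < 1 := by exact_mod_cast habs
    have := Int.abs_lt_one_iff.mp h0
    have hMeq : M = (m : ℤ) := by omega
    exact_mod_cast congrArg (fun z : ℤ => (z : ℝ)) hMeq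
  rw [hS, hSval, hMm]
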